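/- Let ℓ, n, m ≥ 1 and identify Σ_{ℓ,n,m} = ℝ^{ℓ×n} × ℝ^{ℓ×n} × ℝ^{ℓ×m} with ℝ^{ℓ(2n+m)}. The set S = {(E,A,B) ∈ Σ_{ℓ,n,m} : for every Z ∈ ℝ^{n×(n−rk E)} whose image (column space) equals ker E, one has rk [E, A, B] = rk [E, AZ, B]} (the set of impulse controllable differential-algebraic systems d/dt(Ex) = Ax + Bu) is generic if, and only if, ℓ ≤ n + m. -/

import Mathlib

/-- A set `V ⊆ ℝ^N` is an algebraic variety if it is the common zero locus of
finitely many polynomials. -/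
def IsAlgVariety {ι F : Type} [CommRing F] (V : Set (ι → F)) : Prop :=
  ∃ (k : ℕ) (p : Fin k → MvPolynomial ι F),
    V = {x | ∀ i, MvPolynomial.eval x (p i) = 0}

/-- A set `S ⊆ ℝ^N` is generic if its complement is contained in a proper
algebraic variety. -/
def IsGeneric {ι F : Type} [CommRing F] (S : Set (ι → F)) : Prop :=
  ∃ V : Set (ι → F), IsAlgVariety V ∧ V ≠ Set.univ ∧ Sᶜ ⊆ V

/-- Index set of the coordinates of `Σ_{ℓ,n,m} = ℝ^{ℓ×n} × ℝ^{ℓ×n} × ℝ^{ℓ×m} ≅ ℝ^{ℓ(2n+m)}`. -/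
abbrev SigmaIdx (l n m : ℕ) : Type := (Fin l × Fin n) ⊕ (Fin l × Fin n) ⊕ (Fin l × Fin m)

/-- The matrix `E` of a point of `Σ_{ℓ,n,m}`. -/
def Emat {l n m : ℕ} (x : SigmaIdx l n m → ℝ) : Matrix (Fin l) (Fin n) ℝ :=
  Matrix.of fun i j => x (Sum.inl (i, j))

/-- The matrix `A` of a point of `Σ_{ℓ,n,m}`. -/
def Amat {l n m : ℕ} (x : SigmaIdx l n m → ℝ) : Matrix (Fin l) (Fin n) ℝ :=
  Matrix.of fun i j => x (Sum.inr (Sum.inl (i, j)))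

/-- The matrix `B` of a point of `Σ_{ℓ,n,m}`. -/
def Bmat {l n m : ℕ} (x : SigmaIdx l n m → ℝ) : Matrix (Fin l) (Fin m) ℝ :=
  Matrix.of fun i j => x (Sum.inr (Sum.inr (i, j)))

open Matrix MvPolynomial

section AuxRank

variable {κ L C : Type} [Fintype κ] [Fintype L] [Fintype C]
  [DecidableEq κ] [DecidableEq L] [DecidableEq C]

/-- A matrix has rank at least `r` if it has an invertible `r × r` submatrix. -/
lemma le_rank_of_isUnit_det (M : Matrix L C ℝ) (f : κ → L) (g : κ → C)
    (h : IsUnit (M.submatrix f g).det) : Fintype.card κ ≤ M.rank := by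
  have h1 : (M.submatrix f g).rank = Fintype.card κ :=
    Matrix.rank_of_isUnit _ ((Matrix.isUnit_iff_isUnit_det _).mpr h)
  have e1 : ((1 : Matrix L L ℝ).submatrix f (Equiv.refl L) * M) *
      ((1 : Matrix C C ℝ).submatrix (Equiv.refl C) g) = M.submatrix f g := by
    rw [Matrix.one_submatrix_mul, Matrix.mul_submatrix_one]
    simp [Matrix.submatrix_submatrix]
  calc Fintype.card κ = (M.submatrix f g).rank := h1.symm
    _ ≤ _ := by
        rw [← e1]
        exact (Matrix.rank_mul_le_left _ _).trans (Matrix.rank_mul_le_right _ _)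

/-- The range of the linear map of a block-column matrix is the sup of the ranges. -/
lemma range_fromColumns_mulVecLin {n₁ n₂ : Type} [Fintype n₁] [Fintype n₂]
    (A : Matrix L n₁ ℝ) (B : Matrix L n₂ ℝ) :
    LinearMap.range (Matrix.fromCols A B).mulVecLin =
      LinearMap.range A.mulVecLin ⊔ LinearMap.range B.mulVecLin := by
  apply le_antisymm
  · rintro _ ⟨v, rfl⟩
    have hv : v = Sum.elim (v ∘ Sum.inl) (v ∘ Sum.inr) := (Sum.elim_comp_inl_inr v).symm
    rw [Matrix.mulVecLin_apply, hv, Matrix.fromCols_mulVec_sumElim]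
    exact Submodule.add_mem_sup ⟨v ∘ Sum.inl, rfl⟩ ⟨v ∘ Sum.inr, rfl⟩
  · rw [sup_le_iff]
    constructor
    · rintro _ ⟨v, rfl⟩
      exact ⟨Sum.elim v 0, by simp⟩
    · rintro _ ⟨v, rfl⟩
      exact ⟨Sum.elim 0 v, by simp⟩

lemma submatrix_one_of_injective {f : κ → L} (hf : Function.Injective f) :
    (1 : Matrix L L ℝ).submatrix f f = 1 := by
  ext k k'
  simp [Matrix.one_apply, hf.eq_iff]

end AuxRank

section AuxIdx

variable {l n m : ℕ}

/-- Column index of the concatenated matrix `[E, A, B]`. -/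
abbrev FullCols (n m : ℕ) : Type := Fin n ⊕ (Fin n ⊕ Fin m)

/-- Coordinate of `Σ_{ℓ,n,m}` corresponding to entry `(i, c)` of `[E, A, B]`. -/
def fullIdx (i : Fin l) : FullCols n m → SigmaIdx l n m
  | Sum.inl a => Sum.inl (i, a)
  | Sum.inr (Sum.inl a) => Sum.inr (Sum.inl (i, a))
  | Sum.inr (Sum.inr b) => Sum.inr (Sum.inr (i, b))

/-- The concatenated matrix `[E, A, B]`. -/
def fullMat (x : SigmaIdx l n m → ℝ) : Matrix (Fin l) (FullCols n m) ℝ :=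
  Matrix.of fun i c => x (fullIdx i c)

lemma fullMat_eq (x : SigmaIdx l n m → ℝ) :
    fullMat x = Matrix.fromCols (Emat x) (Matrix.fromCols (Amat x) (Bmat x)) := by
  ext i (a | (a | b)) <;> rfl

lemma fullIdx_inj {i i' : Fin l} {c c' : FullCols n m}
    (h : fullIdx i c = fullIdx i' c') : i = i' ∧ c = c' := by
  rcases c with a | (a | b) <;> rcases c' with a' | (a' | b') <;>
    simp_all [fullIdx, Prod.ext_iff]

/-- The matrix of coordinate polynomials representing `[E, A, B]`. -/
noncomputable def fullPoly : Matrix (Fin l) (FullCols n m) (MvPolynomial (SigmaIdx l n m) ℝ) :=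
  Matrix.of fun i c => MvPolynomial.X (fullIdx i c)

lemma eval_det_submatrix (x : SigmaIdx l n m → ℝ) {κ : Type} [Fintype κ] [DecidableEq κ]
    (f : κ → Fin l) (g : κ → FullCols n m) :
    MvPolynomial.eval x ((fullPoly.submatrix f g).det) = ((fullMat x).submatrix f g).det := by
  rw [RingHom.map_det]
  congr 1
  ext k k'
  simp [fullPoly, fullMat]

open Classical in
/-- A point of `Σ_{ℓ,n,m}` whose `[E, A, B]`-submatrix selected by `f, g` is the identity. -/
noncomputable def witness {κ : Type} (f : κ → Fin l) (g : κ → FullCols n m) :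
    SigmaIdx l n m → ℝ :=
  fun v => if ∃ k, fullIdx (f k) (g k) = v then 1 else 0

lemma witness_submatrix {κ : Type} [Fintype κ] [DecidableEq κ]
    {f : κ → Fin l} {g : κ → FullCols n m}
    (hf : Function.Injective f) (hg : Function.Injective g) :
    (fullMat (witness f g)).submatrix f g = 1 := by
  ext k k'
  simp only [Matrix.submatrix_apply, fullMat, Matrix.of_apply, witness, Matrix.one_apply]
  by_cases h : k = k'
  · subst h
    rw [if_pos ⟨k, rfl⟩, if_pos rfl]
  · rw [if_neg, if_neg h]
    rintro ⟨k'', hk⟩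
    obtain ⟨h1, h2⟩ := fullIdx_inj hk
    exact h ((hf h1) ▸ hg h2)

end AuxIdx

/-- The set of impulse controllable DAE systems `d/dt(Ex) = Ax + Bu`, i.e. those with
`rk [E, A, B] = rk [E, AZ, B]` for every matrix `Z ∈ ℝ^{n×(n−rk E)}` whose column space
equals `ker E`, is generic in `Σ_{ℓ,n,m}` if, and only if, `ℓ ≤ n + m`. -/
theorem statement_15 (l n m : ℕ) (hl : 1 ≤ l) (hn : 1 ≤ n) (hm : 1 ≤ m) :
    IsGeneric {x : SigmaIdx l n m → ℝ |
        ∀ Z : Matrix (Fin n) (Fin (n - (Emat x).rank)) ℝ,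
          LinearMap.range Z.mulVecLin = LinearMap.ker (Emat x).mulVecLin →
          (Matrix.fromCols (Emat x) (Matrix.fromCols (Amat x) (Bmat x))).rank =
            (Matrix.fromCols (Emat x) (Matrix.fromCols (Amat x * Z) (Bmat x))).rank} ↔
      l ≤ n + m := by
  constructor
  · -- If the set is generic then `l ≤ n + m`.
    intro hG
    by_contra hlnm
    push_neg at hlnm
    -- the selection maps for an `(n+m+1) × (n+m+1)` minor of `[E, A, B]` containing an
    -- `n × n` minor of `E`
    set κ₂ : Type := Fin n ⊕ (Unit ⊕ Fin m) with hκ₂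
    have hcard : Fintype.card κ₂ = n + m + 1 := by simp [hκ₂]; omega
    have hcard_le : Fintype.card κ₂ ≤ Fintype.card (Fin l) := by
      rw [hcard, Fintype.card_fin]; omega
    obtain ⟨f₂⟩ := Function.Embedding.nonempty_of_card_le hcard_le
    let g₂ : κ₂ → FullCols n m := fun k =>
      match k with
      | Sum.inl a => Sum.inl a
      | Sum.inr (Sum.inl _) => Sum.inr (Sum.inl ⟨0, hn⟩)
      | Sum.inr (Sum.inr b) => Sum.inr (Sum.inr b)
    have hg₂ : Function.Injective g₂ := by
      rintro (a | (u | b)) (a' | (u' | b')) h <;> simp_all [g₂]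
    have hg₂l : g₂ ∘ Sum.inl = (Sum.inl : Fin n → FullCols n m) := rfl
    -- polynomials: the `n × n` minor of `E` and the `(n+m+1)` minor of `[E,A,B]`
    set qE : MvPolynomial (SigmaIdx l n m) ℝ :=
      ((fullPoly (l := l) (n := n) (m := m)).submatrix (f₂ ∘ Sum.inl) Sum.inl).det with hqE
    set qF : MvPolynomial (SigmaIdx l n m) ℝ :=
      ((fullPoly (l := l) (n := n) (m := m)).submatrix f₂ g₂).det with hqF
    -- the witness point shows `qE * qF ≠ 0`
    have hW : (fullMat (witness f₂ g₂)).submatrix f₂ g₂ = (1 : Matrix κ₂ κ₂ ℝ) :=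
      witness_submatrix f₂.injective hg₂
    have hWE : (fullMat (witness f₂ g₂)).submatrix (f₂ ∘ Sum.inl) (Sum.inl) =
        (1 : Matrix (Fin n) (Fin n) ℝ) := by
      have : (fullMat (witness f₂ g₂)).submatrix (f₂ ∘ Sum.inl) (g₂ ∘ Sum.inl) =
          ((fullMat (witness f₂ g₂)).submatrix f₂ g₂).submatrix Sum.inl Sum.inl := by
        simp [Matrix.submatrix_submatrix]
      rw [← hg₂l, this, hW]
      exact submatrix_one_of_injective Sum.inl_injective
    have hq0 : qE * qF ≠ 0 := by
      intro h0
      have : MvPolynomial.eval (witness f₂ g₂) (qE * qF) = 0 := by rw [h0]; simp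
      rw [_root_.map_mul, hqE, hqF, eval_det_submatrix, eval_det_submatrix, hW, hWE] at this
      simp at this
    -- every impulse controllable system is a zero of `qE * qF`
    have hSsub : ∀ x : SigmaIdx l n m → ℝ,
        x ∈ {x : SigmaIdx l n m → ℝ |
          ∀ Z : Matrix (Fin n) (Fin (n - (Emat x).rank)) ℝ,
            LinearMap.range Z.mulVecLin = LinearMap.ker (Emat x).mulVecLin →
            (Matrix.fromCols (Emat x) (Matrix.fromCols (Amat x) (Bmat x))).rank =
              (Matrix.fromCols (Emat x) (Matrix.fromCols (Amat x * Z) (Bmat x))).rank} →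
        MvPolynomial.eval x (qE * qF) = 0 := by
      intro x hx
      by_contra hne
      rw [_root_.map_mul] at hne
      obtain ⟨hneE, hneF⟩ := mul_ne_zero_iff.mp hne
      rw [hqE, eval_det_submatrix] at hneE
      rw [hqF, eval_det_submatrix] at hneF
      -- `E` has full column rank `n`
      have hsubE : (fullMat x).submatrix (f₂ ∘ Sum.inl) (Sum.inl) =
          (Emat x).submatrix (f₂ ∘ Sum.inl) id := by
        ext a a'; rfl
      have hrkE_ge : n ≤ (Emat x).rank := by
        have := le_rank_of_isUnit_det (Emat x) (f₂ ∘ Sum.inl) id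
          (by rw [← hsubE]; exact isUnit_iff_ne_zero.mpr hneE)
        simpa using this
      have hrkE : (Emat x).rank = n :=
        le_antisymm (by simpa using (Emat x).rank_le_card_width) hrkE_ge
      -- hence `ker E = ⊥`
      have hker : LinearMap.ker (Emat x).mulVecLin = ⊥ := by
        have hrn := LinearMap.finrank_range_add_finrank_ker (Emat x).mulVecLin
        rw [show Module.finrank ℝ (LinearMap.range (Emat x).mulVecLin) = (Emat x).rank from rfl,
          hrkE] at hrn
        simp only [Module.finrank_pi, Fintype.card_fin] at hrn
        have : Module.finrank ℝ (LinearMap.ker (Emat x).mulVecLin) = 0 := by omega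
        exact Submodule.finrank_eq_zero.mp this
      -- use `Z = 0`
      have hZ : LinearMap.range (0 : Matrix (Fin n) (Fin (n - (Emat x).rank)) ℝ).mulVecLin =
          LinearMap.ker (Emat x).mulVecLin := by
        rw [Matrix.mulVecLin_zero, LinearMap.range_zero, hker]
      have heq := hx 0 hZ
      -- rank of `[E, A*0, B]` is at most `n + m`
      have hr2 : (Matrix.fromCols (Emat x)
          (Matrix.fromCols (Amat x * (0 : Matrix (Fin n) (Fin (n - (Emat x).rank)) ℝ))
            (Bmat x))).rank ≤ n + m := by
        rw [Matrix.mul_zero]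
        rw [Matrix.rank, range_fromColumns_mulVecLin, range_fromColumns_mulVecLin]
        rw [Matrix.mulVecLin_zero, LinearMap.range_zero, bot_sup_eq]
        calc Module.finrank ℝ ((LinearMap.range (Emat x).mulVecLin ⊔
              LinearMap.range (Bmat x).mulVecLin : Submodule ℝ (Fin l → ℝ)) : Submodule ℝ _)
            ≤ Module.finrank ℝ (LinearMap.range (Emat x).mulVecLin) +
              Module.finrank ℝ (LinearMap.range (Bmat x).mulVecLin) :=
              Submodule.finrank_add_le_finrank_add_finrank _ _
          _ ≤ n + m := by
              apply add_le_add
              · exact le_of_eq hrkE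
              · exact (Bmat x).rank_le_card_width.trans (le_of_eq (Fintype.card_fin m))
      -- but rank of `[E, A, B]` is at least `n + m + 1`
      have hr1 : n + m + 1 ≤ (Matrix.fromCols (Emat x)
          (Matrix.fromCols (Amat x) (Bmat x))).rank := by
        rw [← fullMat_eq]
        have := le_rank_of_isUnit_det (fullMat x) f₂ g₂ (isUnit_iff_ne_zero.mpr hneF)
        rwa [hcard] at this
      omega
    -- derive the contradiction with genericity
    obtain ⟨V, ⟨k, p, hVdef⟩, hVne, hVsub⟩ := hG
    have : ∃ x₀, x₀ ∉ V := by
      by_contra h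
      push_neg at h
      exact hVne (Set.eq_univ_of_forall h)
    obtain ⟨x₀, hx₀⟩ := this
    rw [hVdef] at hx₀

    obtain ⟨i, hi⟩ : ∃ i, MvPolynomial.eval x₀ (p i) ≠ 0 := by
      by_contra h
      push_neg at h
      exact hx₀ h
    have hpi : p i ≠ 0 := fun h => hi (by rw [h]; simp)
    have hall : ∀ x : SigmaIdx l n m → ℝ, MvPolynomial.eval x ((qE * qF) * p i) = 0 := by
      intro x
      by_cases hx : x ∈ {x : SigmaIdx l n m → ℝ |
          ∀ Z : Matrix (Fin n) (Fin (n - (Emat x).rank)) ℝ,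
            LinearMap.range Z.mulVecLin = LinearMap.ker (Emat x).mulVecLin →
            (Matrix.fromCols (Emat x) (Matrix.fromCols (Amat x) (Bmat x))).rank =
              (Matrix.fromCols (Emat x) (Matrix.fromCols (Amat x * Z) (Bmat x))).rank}
      · rw [_root_.map_mul, hSsub x hx, zero_mul]
      · have : x ∈ V := hVsub hx
        rw [hVdef] at this
        rw [_root_.map_mul, this i, mul_zero]
    have : (qE * qF) * p i = 0 := by
      apply MvPolynomial.funext
      intro x
      rw [hall x]
      simp
    rcases mul_eq_zero.mp this with h | h
    · exact hq0 h
    · exact hpi h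
  · -- If `l ≤ n + m` then the set is generic.
    intro hlnm
    -- select `l` columns among those of `[E, B]`
    let colsel : Fin l → FullCols n m := fun j =>
      Sum.map id Sum.inr (finSumFinEquiv.symm (Fin.castLE hlnm j))
    have hcolsel : Function.Injective colsel := by
      intro a b h
      have := finSumFinEquiv.symm.injective
        (Sum.map_injective.mpr ⟨fun _ _ h => h, Sum.inr_injective⟩ |>.eq_iff.mp h)
      exact Fin.castLE_injective hlnm this
    set q : MvPolynomial (SigmaIdx l n m) ℝ :=
      ((fullPoly (l := l) (n := n) (m := m)).submatrix id colsel).det with hq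
    refine ⟨{x | MvPolynomial.eval x q = 0}, ⟨1, fun _ => q, by ext x; simp⟩, ?_, ?_⟩
    · -- the variety is proper
      intro hup
      have : MvPolynomial.eval (witness id colsel) q = 0 := by
        have := hup ▸ Set.mem_univ (witness (l := l) id colsel)
        rw [Set.eq_univ_iff_forall] at hup
        exact hup _
      rw [hq, eval_det_submatrix, witness_submatrix (f := id) (g := colsel) Function.injective_id hcolsel] at this
      simp at this
    · -- the complement of the impulse controllable set is contained in the variety
      intro x hx
      simp only [Set.mem_compl_iff, Set.mem_setOf_eq] at hx
      simp only [Set.mem_setOf_eq]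
      by_contra hne
      apply hx
      intro Z _
      -- `rk [E, B] = l`, hence both big matrices have rank `l`
      rw [hq, eval_det_submatrix] at hne
      have hEB : ((fullMat x).submatrix id colsel) =
          ((Matrix.fromCols (Emat x) (Bmat x)).submatrix id
            (fun j => finSumFinEquiv.symm (Fin.castLE hlnm j))) := by
        ext i j
        rcases hj : finSumFinEquiv.symm (Fin.castLE hlnm j) with a | b <;>
          simp [fullMat, fullIdx, colsel, hj, Emat, Bmat, Matrix.fromCols_apply_inl, Matrix.fromCols_apply_inr]
      have hrkEB : l ≤ (Matrix.fromCols (Emat x) (Bmat x)).rank := by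
        have := le_rank_of_isUnit_det (Matrix.fromCols (Emat x) (Bmat x)) id
          (fun j => finSumFinEquiv.symm (Fin.castLE hlnm j))
          (by rw [← hEB]; exact isUnit_iff_ne_zero.mpr hne)
        simpa using this
      have key : ∀ (p : Type) (_ : Fintype p) (C : Matrix (Fin l) p ℝ),
          (Matrix.fromCols (Emat x) (Matrix.fromCols C (Bmat x))).rank = l := by
        intro p hp C
        apply le_antisymm
        · simpa using (Matrix.fromCols (Emat x)
            (Matrix.fromCols C (Bmat x))).rank_le_card_height
        · calc l ≤ (Matrix.fromCols (Emat x) (Bmat x)).rank := hrkEB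
            _ ≤ (Matrix.fromCols (Emat x) (Matrix.fromCols C (Bmat x))).rank := by
                rw [Matrix.rank, Matrix.rank, range_fromColumns_mulVecLin,
                  range_fromColumns_mulVecLin, range_fromColumns_mulVecLin]
                apply Submodule.finrank_mono
                exact sup_le_sup_left le_sup_right _
      rw [key _ _ (Amat x), key _ _ (Amat x * Z)]
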